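/- With S, T, g, γ ∈ [0,1), λ ∈ [0,1) as given, let M V denote the unique bounded fixed point of the operator W ↦ (s ↦ max(g(s), γ(λ W(T s) + (1-λ) V(T s)))). Then the map V ↦ M V is a contraction on bounded functions with sup norm: ‖M V₁ - M V₂‖∞ ≤ η ‖V₁ - V₂‖∞ where η = γ(1-λ)/(1-λγ) < 1. -/

import Mathlib

theorem M_operator_contraction {S : Type*} [Nonempty S] (T : S → S)
    (g V₁ V₂ W₁ W₂ : S → ℝ)
    (hg : ∃ C, ∀ s, |g s| ≤ C)
    (hV₁ : ∃ C, ∀ s, |V₁ s| ≤ C) (hV₂ : ∃ C, ∀ s, |V₂ s| ≤ C)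
    (hW₁ : ∃ C, ∀ s, |W₁ s| ≤ C) (hW₂ : ∃ C, ∀ s, |W₂ s| ≤ C)
    (γ lam : ℝ) (hγ0 : 0 ≤ γ) (hγ1 : γ < 1) (hl0 : 0 ≤ lam) (hl1 : lam < 1)
    (hfix₁ : ∀ s, W₁ s = max (g s) (γ * (lam * W₁ (T s) + (1 - lam) * V₁ (T s))))
    (hfix₂ : ∀ s, W₂ s = max (g s) (γ * (lam * W₂ (T s) + (1 - lam) * V₂ (T s)))) :
    γ * (1 - lam) / (1 - lam * γ) < 1 ∧
    ∀ C : ℝ, (∀ s, |V₁ s - V₂ s| ≤ C) →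
      ∀ s, |W₁ s - W₂ s| ≤ γ * (1 - lam) / (1 - lam * γ) * C := by
  have hlg : lam * γ < 1 := by nlinarith
  have hpos : 0 < 1 - lam * γ := by linarith
  constructor
  · rw [div_lt_one hpos]; nlinarith
  intro C hC
  obtain ⟨K₁, hK₁⟩ := hW₁
  obtain ⟨K₂, hK₂⟩ := hW₂
  set K₀ : ℝ := K₁ + K₂ with hK₀def
  have hWbd : ∀ s, |W₁ s - W₂ s| ≤ K₀ := by
    intro s
    calc |W₁ s - W₂ s| ≤ |W₁ s| + |W₂ s| := abs_sub _ _
      _ ≤ K₁ + K₂ := add_le_add (hK₁ s) (hK₂ s)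
  have hK₀ : 0 ≤ K₀ := le_trans (abs_nonneg _) (hWbd (Classical.arbitrary S))
  have hC0 : 0 ≤ C := le_trans (abs_nonneg _) (hC (Classical.arbitrary S))
  set E : ℝ := γ * (1 - lam) / (1 - lam * γ) * C with hEdef
  have hE0 : 0 ≤ E := by
    apply mul_nonneg _ hC0
    apply div_nonneg _ (le_of_lt hpos)
    nlinarith
  have hEeq : γ * lam * E + γ * (1 - lam) * C = E := by
    field_simp [hEdef]
    have h3 : γ * (1 - lam) / (1 - lam * γ) * (1 - lam * γ) = γ * (1 - lam) :=
      div_mul_cancel₀ _ hpos.ne'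
    linear_combination (-(1 - γ * lam)) * hEdef + (-C) * h3
  -- one-step estimate
  have hstep : ∀ B : ℝ, (∀ s, |W₁ s - W₂ s| ≤ B) →
      ∀ s, |W₁ s - W₂ s| ≤ γ * lam * B + γ * (1 - lam) * C := by
    intro B hB s
    rw [hfix₁ s, hfix₂ s]
    have h1 : |max (g s) (γ * (lam * W₁ (T s) + (1 - lam) * V₁ (T s))) -
        max (g s) (γ * (lam * W₂ (T s) + (1 - lam) * V₂ (T s)))| ≤
        |γ * (lam * W₁ (T s) + (1 - lam) * V₁ (T s)) -
         γ * (lam * W₂ (T s) + (1 - lam) * V₂ (T s))| := by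
      rw [max_comm (g s), max_comm (g s)]
      exact abs_max_sub_max_le_abs _ _ _
    refine h1.trans ?_
    have h2 : γ * (lam * W₁ (T s) + (1 - lam) * V₁ (T s)) -
        γ * (lam * W₂ (T s) + (1 - lam) * V₂ (T s)) =
        γ * lam * (W₁ (T s) - W₂ (T s)) + γ * (1 - lam) * (V₁ (T s) - V₂ (T s)) := by
      ring
    rw [h2]
    calc _ ≤ |γ * lam * (W₁ (T s) - W₂ (T s))| + |γ * (1 - lam) * (V₁ (T s) - V₂ (T s))| :=
          abs_add_le _ _
      _ = γ * lam * |W₁ (T s) - W₂ (T s)| + γ * (1 - lam) * |V₁ (T s) - V₂ (T s)| := by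
          simp [abs_mul, abs_of_nonneg hγ0, abs_of_nonneg hl0,
            abs_of_nonneg (show (0:ℝ) ≤ 1 - lam by linarith)]
      _ ≤ γ * lam * B + γ * (1 - lam) * C := by
          refine add_le_add ?_ ?_
          · exact mul_le_mul_of_nonneg_left (hB _) (by positivity)
          · exact mul_le_mul_of_nonneg_left (hC _) (by nlinarith)
  have key : ∀ n : ℕ, ∀ s, |W₁ s - W₂ s| ≤ (γ * lam) ^ n * K₀ + E := by
    intro n
    induction n with
    | zero => intro s; simpa using le_trans (hWbd s) (by linarith)
    | succ n ih =>
      intro s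
      have := hstep ((γ * lam) ^ n * K₀ + E) ih s
      refine this.trans ?_
      have : γ * lam * ((γ * lam) ^ n * K₀ + E) + γ * (1 - lam) * C =
          (γ * lam) ^ (n + 1) * K₀ + (γ * lam * E + γ * (1 - lam) * C) := by ring
      rw [this, hEeq]
  intro s
  have hlim : Filter.Tendsto (fun n : ℕ => (γ * lam) ^ n * K₀ + E) Filter.atTop (nhds E) := by
    have h0 : Filter.Tendsto (fun n : ℕ => (γ * lam) ^ n) Filter.atTop (nhds 0) := by
      apply tendsto_pow_atTop_nhds_zero_of_lt_one (by positivity)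
      nlinarith
    have := (h0.mul_const K₀).add_const E
    simpa using this
  exact ge_of_tendsto' hlim (fun n => key n s)
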